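/- Let n, l, d, p and s_i be as in the setup and let 1 ≤ i ≤ p and 1 ≤ j ≤ p with i ≠ j. Then the following are equivalent: (1) there exist x, y ∈ [1, l−1] such that, writing [a, b] = I_i(x) and [c, e] = I_j(y), one has c ≤ b, b ≤ e, and a ≤ c; (2) d = 2, l > 3, i is odd, and j = i + 1. (This is the combinatorial form of the paper's lemma: Hom_Λ(D_i, D_j) ≠ 0 if and only if d = 2, l > 3, i is odd and j = i + 1.) -/

import Mathlib

open scoped Classical

/-- The numerical setup under which the truncated linear Nakayama algebra `Λ(n,l)`
admits a `d`-cluster tilting subcategory, together with the integers `s i`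
(defined by `2 * s i = …`). -/
structure NakSetup where
  n : ℤ
  l : ℤ
  d : ℤ
  p : ℤ
  s : ℤ → ℤ
  hl : 2 ≤ l
  hd : 2 ≤ d
  hp : 1 ≤ p
  hn : 2 * n = (p - 1) * ((d - 1) * l + 2) + l
  hcase : l = 2 ∨ (2 < l ∧ Even d ∧ Even p)
  hs_odd : ∀ i, 1 ≤ i → i ≤ p → Odd i → 2 * s i = (i - 1) * (d - 1) * l + 2 * i
  hs_even : ∀ i, 1 ≤ i → i ≤ p → Even i → 2 * s i = (i - 1) * ((d - 1) * l + 2) + l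

/-- The left endpoint of the interval `I_i(x)` supporting the unique indecomposable
module of length `x` on the `i`-th diagonal. -/
noncomputable def Ilo (S : NakSetup) (i x : ℤ) : ℤ :=
  if Odd i then S.s i else S.s i - x + 1

/-- The right endpoint of the interval `I_i(x)`. -/
noncomputable def Ihi (S : NakSetup) (i x : ℤ) : ℤ :=
  if Odd i then S.s i + x - 1 else S.s i

/-- for `1 ≤ i, j ≤ p` with `i ≠ j`, there exist `x, y ∈ [1, l-1]` with
(writing `[a,b] = I_i(x)` and `[c,e] = I_j(y)`) `c ≤ b`, `b ≤ e` and `a ≤ c` if and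
only if `d = 2`, `l > 3`, `i` is odd, and `j = i + 1`.
(Equivalently: `Hom_Λ(D_i, D_j) ≠ 0` iff `d = 2`, `l > 3`, `i` odd, `j = i + 1`.) -/
theorem stmt0 (S : NakSetup) (i j : ℤ) (hi1 : 1 ≤ i) (hip : i ≤ S.p)
    (hj1 : 1 ≤ j) (hjp : j ≤ S.p) (hij : i ≠ j) :
    (∃ x, 1 ≤ x ∧ x ≤ S.l - 1 ∧ ∃ y, 1 ≤ y ∧ y ≤ S.l - 1 ∧
        Ilo S j y ≤ Ihi S i x ∧ Ihi S i x ≤ Ihi S j y ∧ Ilo S i x ≤ Ilo S j y) ↔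
      (S.d = 2 ∧ 3 < S.l ∧ Odd i ∧ j = i + 1) := by
  have hl := S.hl
  have hd := S.hd
  -- M = (d-1)*l ≥ l
  have hM : S.l ≤ (S.d - 1) * S.l := le_mul_of_one_le_left (by linarith) (by linarith)
  have hM0 : (0:ℤ) ≤ (S.d - 1) * S.l + 2 := by linarith
  constructor
  · rintro ⟨x, hx1, hx2, y, hy1, hy2, h1, h2, h3⟩
    rcases Int.even_or_odd i with hEi | hOi
    · -- i even: all cases impossible
      exfalso
      have hnOi : ¬ Odd i := (Int.not_odd_iff_even).mpr hEi
      have hA := S.hs_even i hi1 hip hEi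
      rcases Int.even_or_odd j with hEj | hOj
      · -- i even, j even
        have hnOj : ¬ Odd j := (Int.not_odd_iff_even).mpr hEj
        have hB := S.hs_even j hj1 hjp hEj
        simp only [Ilo, Ihi, if_neg hnOi, if_neg hnOj] at h1 h2 h3
        have hBA : 2 * S.s j - 2 * S.s i = (j - i) * ((S.d - 1) * S.l + 2) := by
          linear_combination hB - hA
        have hEd : Even (j - i) := hEj.sub hEi
        obtain ⟨k, hk⟩ := hEd
        have htri : j - i ≤ -2 ∨ j - i = 0 ∨ 2 ≤ j - i := by omega
        rcases htri with h | h | h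
        · have := mul_le_mul_of_nonneg_right h hM0
          -- h2 : s i ≤ s j gives 0 ≤ (j-i)*K
          linarith
        · exact hij (by omega)
        · have := mul_le_mul_of_nonneg_right h hM0
          -- h1 : s j - y + 1 ≤ s i gives (j-i)*K ≤ 2y - 2 ≤ 2l - 4
          linarith
      · -- i even, j odd
        have hB := S.hs_odd j hj1 hjp hOj
        simp only [Ilo, Ihi, if_neg hnOi, if_pos hOj] at h1 h2 h3
        have hBA : 2 * S.s j - 2 * S.s i = (j - i) * ((S.d - 1) * S.l + 2) + 2 - S.l := by
          linear_combination hB - hA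
        have hOd : Odd (j - i) := Odd.sub_even hOj hEi
        obtain ⟨k, hk⟩ := hOd
        have htri : j - i ≤ -1 ∨ 1 ≤ j - i := by omega
        rcases htri with h | h
        · -- j < i : h2 : s i ≤ s j + y - 1 gives A - B ≤ 2y-2 ≤ 2l-4, but A-B ≥ K - 2 + l ≥ 2l
          have := mul_le_mul_of_nonneg_right h hM0
          linarith
        · -- j > i : h1 : s j ≤ s i gives B - A ≤ 0, but B - A ≥ K + 2 - l ≥ 4
          have := mul_le_mul_of_nonneg_right h hM0
          linarith
    · -- i odd
      have hA := S.hs_odd i hi1 hip hOi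
      rcases Int.even_or_odd j with hEj | hOj
      · -- i odd, j even: the interesting case
        have hnOj : ¬ Odd j := (Int.not_odd_iff_even).mpr hEj
        have hB := S.hs_even j hj1 hjp hEj
        simp only [Ilo, Ihi, if_pos hOi, if_neg hnOj] at h1 h2 h3
        have hBA : 2 * S.s j - 2 * S.s i
            = (j - i) * ((S.d - 1) * S.l + 2) + S.l - 2 := by
          linear_combination hB - hA
        have hOd : Odd (j - i) := hEj.sub_odd hOi
        obtain ⟨k, hk⟩ := hOd
        -- from h3 (a ≤ c): 0 ≤ (j-i)*K + l - 2y ; from h1 (c ≤ b): (j-i)*K + l + 2 ≤ 2x + 2y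
        have htri : j - i ≤ -1 ∨ j - i = 1 ∨ 3 ≤ j - i := by omega
        rcases htri with h | h | h
        · exfalso
          have := mul_le_mul_of_nonneg_right h hM0
          linarith
        · -- j = i + 1
          have hKle : (S.d - 1) * S.l + 2 ≤ 3 * S.l - 6 := by
            have : (j - i) * ((S.d - 1) * S.l + 2) = (S.d - 1) * S.l + 2 := by rw [h]; ring
            linarith
          have hdtri : S.d = 2 ∨ S.d = 3 ∨ 4 ≤ S.d := by omega
          rcases hdtri with hd2 | hd3 | hd4
          · refine ⟨hd2, by nlinarith, hOi, by omega⟩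
          · exfalso
            have hl8 : 8 ≤ S.l := by nlinarith
            rcases S.hcase with hc | ⟨_, hEd, _⟩
            · omega
            · obtain ⟨t, ht⟩ := hEd; omega
          · exfalso
            have h3l : 3 * S.l ≤ (S.d - 1) * S.l :=
              mul_le_mul_of_nonneg_right (by omega) (by linarith)
            linarith
        · exfalso
          have := mul_le_mul_of_nonneg_right h hM0
          linarith
      · -- i odd, j odd
        exfalso
        have hB := S.hs_odd j hj1 hjp hOj
        simp only [Ilo, Ihi, if_pos hOi, if_pos hOj] at h1 h2 h3
        have hBA : 2 * S.s j - 2 * S.s i = (j - i) * ((S.d - 1) * S.l + 2) := by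
          linear_combination hB - hA
        have hEd : Even (j - i) := hOj.sub_odd hOi
        obtain ⟨k, hk⟩ := hEd
        have htri : j - i ≤ -2 ∨ j - i = 0 ∨ 2 ≤ j - i := by omega
        rcases htri with h | h | h
        · have := mul_le_mul_of_nonneg_right h hM0
          -- h3 : s i ≤ s j
          linarith
        · exact hij (by omega)
        · have := mul_le_mul_of_nonneg_right h hM0
          -- h1 : s j ≤ s i + x - 1
          linarith
  · rintro ⟨hd2, hl3, hOi, rfl⟩
    have hEj : Even (i + 1) := hOi.add_one
    have hnOj : ¬ Odd (i + 1) := (Int.not_odd_iff_even).mpr hEj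
    have hA := S.hs_odd i hi1 hip hOi
    have hB := S.hs_even (i + 1) (by omega) hjp hEj
    have hBA : 2 * S.s (i + 1) - 2 * S.s i = 2 * S.l := by
      linear_combination hB - hA + S.l * hd2
    refine ⟨S.l - 1, by omega, le_refl _, S.l - 1, by omega, le_refl _, ?_, ?_, ?_⟩ <;>
      simp only [Ilo, Ihi, if_pos hOi, if_neg hnOj] <;> linarith
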